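/- Let k be a field of characteristic 0, f ∈ k[x] square-free of even degree n, A = k[x]/(f), and δ ∈ A* with f_n·N_{A/k}(δ) = v² for some v ∈ k*. With Q_{δ,i} as above and ℓ(u) = u₀ + u₁θ + ⋯ + u_{n−1}θ^{n−1}, on the locus Q_{δ,2}(u) = ⋯ = Q_{δ,n−1}(u) = 0 with Q_{δ,1}(u) ≠ 0, the values x(u) = −Q_{δ,0}(u)/Q_{δ,1}(u) and y(u) = v·N_{A[u]/k[u]}(ℓ(u))/Q_{δ,1}(u)^{n/2} satisfy y(u)² = f(x(u)). -/

import Mathlib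

open Polynomial

/-- with δ ∈ A* such that f_n·N_{A/k}(δ) = v², on the locus
Q_{δ,2}(u) = ⋯ = Q_{δ,n−1}(u) = 0 with Q_{δ,1}(u) ≠ 0, the values
x(u) = −Q_{δ,0}(u)/Q_{δ,1}(u) and y(u) = v·N(ℓ(u))/Q_{δ,1}(u)^{n/2}
satisfy y(u)² = f(x(u)). -/
lemma norm_root_add_aux (k : Type*) [Field k] (f : k[X]) (hf : f.natDegree ≠ 0) (c : k) :
    Algebra.norm k (AdjoinRoot.root f + algebraMap k (AdjoinRoot f) c)
      = (-1) ^ f.natDegree * (f.eval (-c) * f.leadingCoeff⁻¹) := by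
  have hf0 : f ≠ 0 := fun h => hf (by simp [h])
  set g : k[X] := f.comp (X - C c) with hg
  have hdeg1 : (X - C c).natDegree = 1 := natDegree_X_sub_C c
  have hgdeg : g.natDegree = f.natDegree := by
    rw [hg, natDegree_comp, hdeg1, mul_one]
  have hglc : g.leadingCoeff = f.leadingCoeff := by
    rw [hg, leadingCoeff_comp (by rw [hdeg1]; norm_num)]
    simp [(monic_X_sub_C c).leadingCoeff]
  have hg0 : g ≠ 0 := fun h => hf (by rw [← hgdeg, h]; simp)
  have h1 : aeval (AdjoinRoot.root f + algebraMap k (AdjoinRoot f) c) g = 0 := by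
    rw [hg, aeval_comp]
    simp [AdjoinRoot.aeval_eq, AdjoinRoot.mk_self]
  have hfg : f = g.comp (X + C c) := by
    rw [hg, comp_assoc]
    simp
  have h2 : aeval (AdjoinRoot.root g - algebraMap k (AdjoinRoot g) c) f = 0 := by
    rw [hfg, aeval_comp]
    simp [AdjoinRoot.aeval_eq, AdjoinRoot.mk_self]
  let φ : AdjoinRoot g →ₐ[k] AdjoinRoot f := AdjoinRoot.liftAlgHom g (Algebra.ofId k _) _ h1
  let ψ : AdjoinRoot f →ₐ[k] AdjoinRoot g := AdjoinRoot.liftAlgHom f (Algebra.ofId k _) _ h2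
  have hφψ : φ.comp ψ = AlgHom.id k (AdjoinRoot f) := by
    apply AdjoinRoot.algHom_ext
    simp [φ, ψ, AdjoinRoot.liftAlgHom_root]
  have hψφ : ψ.comp φ = AlgHom.id k (AdjoinRoot g) := by
    apply AdjoinRoot.algHom_ext
    simp [φ, ψ, AdjoinRoot.liftAlgHom_root]
  let e : AdjoinRoot g ≃ₐ[k] AdjoinRoot f := AlgEquiv.ofAlgHom φ ψ hφψ hψφ
  have he : e (AdjoinRoot.root g) = AdjoinRoot.root f + algebraMap k (AdjoinRoot f) c := by
    simp [e, φ, AdjoinRoot.liftAlgHom_root]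
  rw [← he, Algebra.norm_eq_of_algEquiv]
  have pb := AdjoinRoot.powerBasis hg0
  have hnorm : Algebra.norm k (AdjoinRoot.root g)
      = (-1) ^ g.natDegree * (minpoly k (AdjoinRoot.root g)).coeff 0 := by
    have := Algebra.PowerBasis.norm_gen_eq_coeff_zero_minpoly (AdjoinRoot.powerBasis hg0)
    simpa using this
  rw [hnorm, AdjoinRoot.minpoly_root hg0, hgdeg]
  congr 1
  rw [coeff_mul_C, coeff_zero_eq_eval_zero, hg, eval_comp, hglc]
  simp

theorem stmt_18 (k : Type*) [Field k] [CharZero k]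
    (f : k[X]) (hsf : Squarefree f) (n : ℕ) (hn : f.natDegree = n)
    (hne : Even n) (hn2 : 2 ≤ n)
    (δ : (AdjoinRoot f)ˣ) (v : k) (hv : v ≠ 0)
    (hnorm : f.leadingCoeff * Algebra.norm k ((δ : AdjoinRoot f)) = v ^ 2)
    (u q : Fin n → k)
    (hq : (δ : AdjoinRoot f)
          * (∑ i : Fin n, algebraMap k (AdjoinRoot f) (u i) * AdjoinRoot.root f ^ (i : ℕ)) ^ 2
        = ∑ i : Fin n, algebraMap k (AdjoinRoot f) (q i) * AdjoinRoot.root f ^ (i : ℕ))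
    (hvanish : ∀ i : Fin n, 2 ≤ (i : ℕ) → q i = 0)
    (hq1 : q ⟨1, by omega⟩ ≠ 0) :
    (v * Algebra.norm k
          (∑ i : Fin n, algebraMap k (AdjoinRoot f) (u i) * AdjoinRoot.root f ^ (i : ℕ))
        / q ⟨1, by omega⟩ ^ (n / 2)) ^ 2
      = f.eval (-(q ⟨0, by omega⟩) / q ⟨1, by omega⟩) := by
  have h0n : 0 < n := by omega
  have h1n : 1 < n := by omega
  have hf0 : f ≠ 0 := fun h => by rw [h, natDegree_zero] at hn; omega
  have hlc : f.leadingCoeff ≠ 0 := leadingCoeff_ne_zero.mpr hf0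
  set θ := AdjoinRoot.root f with hθ
  set L := Algebra.norm k
      (∑ i : Fin n, algebraMap k (AdjoinRoot f) (u i) * θ ^ (i : ℕ)) with hL
  set q0 := q ⟨0, h0n⟩ with hq0def
  set q1 := q ⟨1, h1n⟩ with hq1def
  have hq1' : q1 ≠ 0 := hq1
  -- Step A: the RHS of hq is q0 + q1 θ
  have hsum : (∑ i : Fin n, algebraMap k (AdjoinRoot f) (q i) * θ ^ (i : ℕ))
      = algebraMap k (AdjoinRoot f) q0 + algebraMap k (AdjoinRoot f) q1 * θ := by
    rw [← Finset.sum_subset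
        (Finset.subset_univ ({⟨0, h0n⟩, ⟨1, h1n⟩} : Finset (Fin n)))]
    · rw [Finset.sum_insert (by simp [Fin.ext_iff]), Finset.sum_singleton]
      simp [← hq0def, ← hq1def]
    · intro x _ hx
      simp only [Finset.mem_insert, Finset.mem_singleton] at hx
      push_neg at hx
      have hxv : 2 ≤ (x : ℕ) := by
        rcases hx with ⟨h1, h2⟩
        simp only [Ne, Fin.ext_iff] at h1 h2
        omega
      rw [hvanish x hxv]
      simp
  -- take norms
  have key := congrArg (Algebra.norm k) hq
  rw [map_mul, map_pow, hsum, ← hL] at key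
  have hsplit : algebraMap k (AdjoinRoot f) q0 + algebraMap k (AdjoinRoot f) q1 * θ
      = algebraMap k (AdjoinRoot f) q1 * (θ + algebraMap k (AdjoinRoot f) (q0 / q1)) := by
    rw [mul_add, ← map_mul, mul_div_cancel₀ _ hq1']
    ring
  have hrank : Module.finrank k (AdjoinRoot f) = n := by
    rw [(AdjoinRoot.powerBasis hf0).finrank, AdjoinRoot.powerBasis_dim, hn]
  have hNq1 : Algebra.norm k (algebraMap k (AdjoinRoot f) q1) = q1 ^ n := by
    rw [Algebra.norm_algebraMap, hrank]
  have hNlin := norm_root_add_aux k f (by omega) (q0 / q1)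
  rw [hn, hne.neg_one_pow, one_mul] at hNlin
  rw [hsplit, map_mul, hNq1, hNlin] at key
  -- final algebra
  have hq1n : (q1 ^ (n / 2)) ^ 2 = q1 ^ n := by
    rw [← pow_mul, Nat.div_mul_cancel hne.two_dvd]
  have hx : -(q0 / q1) = -q0 / q1 := by ring
  rw [hx] at key
  rw [div_pow, hq1n, mul_pow, ← hnorm]
  field_simp
  linear_combination f.leadingCoeff * key + f.eval (-q0 / q1) * q1 ^ n * mul_inv_cancel₀ hlc - q1 ^ n * congrArg (fun x => f.eval x) hx
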